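/- Let (X_k) be a d-type GW process and a ∈ (0,∞)^d with f_i(a) < ∞ for all i. Let (X̄_k) be the associated process with offspring distributions p̄_i(k) = a^k p_i(k)/f_i(a). Then for every x_0, x ∈ ℕ^d, every k ≥ 1 and every l ∈ ℕ^d, P_{x_0}(X̄_k = x, N̄_k = l) = a^{l - x_0} f(a)^{x - l} · P_{x_0}(X_k = x, N_k = l), where N_k = Σ_{j=0}^k X_j is the total progeny up to generation k and f(a)^{x-l} = ∏_i f_i(a)^{x_i - l_i}. -/

import Mathlib

open MeasureTheory Filter Topology
open scoped ENNReal NNReal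

noncomputable section

namespace GW

variable {d : ℕ}

/-- `a^k = ∏_j a_j^{k_j}` for a multi-index `k`. -/
def npow (a : Fin d → ℝ) (k : Fin d → ℕ) : ℝ := ∏ j, a j ^ k j

/-- Dirac mass at `0` on `ℕ^d`. -/
def delta : (Fin d → ℕ) → ℝ := fun k => if k = 0 then 1 else 0

/-- Convolution of two (sub)probability weight functions on `ℕ^d`. -/
def conv (p q : (Fin d → ℕ) → ℝ) : (Fin d → ℕ) → ℝ :=
  fun k => ∑' a : {a : Fin d → ℕ // a ≤ k}, p a.1 * q (k - a.1)

/-- `n`-fold convolution power `p^{*n}` (with `p^{*0} = δ_0`). -/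
def convIter (p : (Fin d → ℕ) → ℝ) : ℕ → (Fin d → ℕ) → ℝ
  | 0 => delta
  | n + 1 => conv p (convIter p n)

/-- One-step transition probabilities of the multitype GW process:
`P_1(x, ·) = p_1^{*x_1} * ⋯ * p_d^{*x_d}`. -/
def trans (p : Fin d → (Fin d → ℕ) → ℝ) (x : Fin d → ℕ) : (Fin d → ℕ) → ℝ :=
  (List.ofFn (fun i => convIter (p i) (x i))).foldr conv delta

/-- `p` is a probability mass function on `ℕ^d`. -/
structure IsPMF (p : (Fin d → ℕ) → ℝ) : Prop where
  nonneg : ∀ k, 0 ≤ p k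
  hasSum : HasSum p 1

/-- `μ x` is the law on path space of the multitype GW process with offspring
distributions `p` started at `x`: a probability measure whose finite-dimensional
distributions are products of one-step GW transition probabilities. -/
def IsGW (p : Fin d → (Fin d → ℕ) → ℝ)
    (μ : (Fin d → ℕ) → Measure (ℕ → Fin d → ℕ)) : Prop :=
  (∀ x, IsProbabilityMeasure (μ x)) ∧
  ∀ (x : Fin d → ℕ) (k : ℕ) (xs : ℕ → Fin d → ℕ), xs 0 = x →
    μ x {ω | ∀ j ≤ k, ω j = xs j}
      = ENNReal.ofReal (∏ j ∈ Finset.range k, trans p (xs j) (xs (j + 1)))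

/-- Total progeny of type `i` along a path (valued in `ℝ≥0∞`). -/
def Ntot (ω : ℕ → Fin d → ℕ) (i : Fin d) : ℝ≥0∞ := ∑' k, (ω k i : ℝ≥0∞)

/-! ### Auxiliary lemmas -/

noncomputable instance (k : Fin d → ℕ) : Fintype {a : Fin d → ℕ // a ≤ k} :=
  @Fintype.ofFinite _ (Set.finite_Iic k)

lemma conv_eq_sum (p q : (Fin d → ℕ) → ℝ) (k : Fin d → ℕ) :
    conv p q k = ∑ a : {a : Fin d → ℕ // a ≤ k}, p a.1 * q (k - a.1) := by
  exact tsum_fintype _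

lemma npow_pos {a : Fin d → ℝ} (ha : ∀ i, 0 < a i) (k : Fin d → ℕ) : 0 < npow a k :=
  Finset.prod_pos fun j _ => pow_pos (ha j) _

lemma npow_mul_sub {a : Fin d → ℝ} {u k : Fin d → ℕ} (h : u ≤ k) :
    npow a u * npow a (k - u) = npow a k := by
  rw [npow, npow, npow, ← Finset.prod_mul_distrib]
  refine Finset.prod_congr rfl fun j _ => ?_
  rw [← pow_add, Pi.sub_apply, Nat.add_sub_cancel' (h j)]

lemma conv_nonneg' {p q : (Fin d → ℕ) → ℝ} (hp : ∀ u, 0 ≤ p u) (hq : ∀ u, 0 ≤ q u)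
    (k : Fin d → ℕ) : 0 ≤ conv p q k := by
  rw [conv_eq_sum]
  exact Finset.sum_nonneg fun a _ => mul_nonneg (hp _) (hq _)

lemma conv_weight {a : Fin d → ℝ} {f g f' g' : (Fin d → ℕ) → ℝ} {c c' : ℝ}
    (h : ∀ u, g u = npow a u * f u / c) (h' : ∀ u, g' u = npow a u * f' u / c') :
    ∀ u, conv g g' u = npow a u * conv f f' u / (c * c') := by
  intro k
  rw [conv_eq_sum, conv_eq_sum, Finset.mul_sum, Finset.sum_div]
  refine Finset.sum_congr rfl fun u _ => ?_
  rw [h, h', div_mul_div_comm]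
  congr 1
  rw [show npow a u.1 * f u.1 * (npow a (k - u.1) * f' (k - u.1))
      = (npow a u.1 * npow a (k - u.1)) * (f u.1 * f' (k - u.1)) by ring,
    npow_mul_sub u.2]

lemma delta_weight (a : Fin d → ℝ) (u : Fin d → ℕ) : delta u = npow a u * delta u / 1 := by
  by_cases h : u = 0 <;> simp [delta, h, npow]

lemma convIter_weight {a : Fin d → ℝ} {f g : (Fin d → ℕ) → ℝ} {c : ℝ}
    (h : ∀ u, g u = npow a u * f u / c) :
    ∀ n u, convIter g n u = npow a u * convIter f n u / c ^ n := by
  intro n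
  induction n with
  | zero => intro u; simpa [convIter] using delta_weight a u
  | succ n ih =>
    intro u
    have := conv_weight h ih u
    simpa [convIter, pow_succ, mul_comm] using this

lemma foldr_weight (a : Fin d → ℝ) :
    ∀ (L : List ((((Fin d → ℕ) → ℝ) × ((Fin d → ℕ) → ℝ)) × ℝ)),
    (∀ t ∈ L, ∀ u, t.1.2 u = npow a u * t.1.1 u / t.2) →
    ∀ u, ((L.map (fun t => t.1.2)).foldr conv delta) u
        = npow a u * ((L.map (fun t => t.1.1)).foldr conv delta) u / (L.map (fun t => t.2)).prod
  | [] , _ => by intro u; simpa using delta_weight a u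
  | t :: L, h => by
    intro u
    have ih := foldr_weight a L (fun s hs => h s (List.mem_cons_of_mem t hs))
    have ht := h t List.mem_cons_self
    have := conv_weight ht ih u
    simpa [List.map_cons, List.foldr_cons] using this

lemma trans_weight {a : Fin d → ℝ} {p pbar : Fin d → (Fin d → ℕ) → ℝ} {c : Fin d → ℝ}
    (h : ∀ i u, pbar i u = npow a u * p i u / c i) (x : Fin d → ℕ) :
    ∀ y, trans pbar x y = npow a y * trans p x y / ∏ i, (c i) ^ (x i) := by
  intro y
  have key := foldr_weight a
    (List.ofFn (fun i => ((convIter (p i) (x i), convIter (pbar i) (x i)), (c i) ^ (x i))))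
    (by
      intro t ht u
      rw [List.mem_ofFn] at ht
      obtain ⟨i, rfl⟩ := ht
      exact convIter_weight (h i) (x i) u) y
  simpa [trans, List.map_ofFn, Function.comp_def, List.prod_ofFn] using key

lemma fa_pos' {p : (Fin d → ℕ) → ℝ} (hp : IsPMF p) {a : Fin d → ℝ} (ha : ∀ i, 0 < a i)
    (hs : Summable fun k => p k * npow a k) : 0 < ∑' k, p k * npow a k := by
  obtain ⟨k0, hk0⟩ : ∃ k0, 0 < p k0 := by
    by_contra h
    push_neg at h
    have : p = 0 := funext fun k => le_antisymm (h k) (hp.nonneg k)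
    have h1 := hp.hasSum
    rw [this] at h1
    simpa using h1.unique hasSum_zero
  calc (0:ℝ) < p k0 * npow a k0 := mul_pos hk0 (npow_pos ha k0)
    _ ≤ _ := hs.le_tsum k0 fun j _ => mul_nonneg (hp.nonneg j) (npow_pos ha j).le

lemma path_prod {a fa : Fin d → ℝ} (hfa : ∀ i, 0 < fa i)
    {p pbar : Fin d → (Fin d → ℕ) → ℝ}
    (h : ∀ i u, pbar i u = npow a u * p i u / fa i)
    (k : ℕ) (s : ℕ → Fin d → ℕ) (x0 x l : Fin d → ℕ)
    (h0 : s 0 = x0) (hkx : s k = x) (hl : (∑ j ∈ Finset.range (k+1), s j) = l) :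
    (∏ j ∈ Finset.range k, trans pbar (s j) (s (j+1)))
      = ((∏ i, a i ^ ((l i:ℤ) - (x0 i:ℤ))) * ∏ i, fa i ^ ((x i:ℤ) - (l i:ℤ)))
        * ∏ j ∈ Finset.range k, trans p (s j) (s (j+1)) := by
  have hli : ∀ i, (∑ j ∈ Finset.range (k+1), s j i) = l i := by
    intro i
    have := congrFun hl i
    simpa using this
  have hsum1 : ∀ i, (∑ j ∈ Finset.range k, s (j+1) i) = l i - x0 i ∧ x0 i ≤ l i := by
    intro i
    have h1 := hli i
    rw [Finset.sum_range_succ'] at h1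
    have h0i : s 0 i = x0 i := congrFun h0 i
    omega
  have hsum2 : ∀ i, (∑ j ∈ Finset.range k, s j i) = l i - x i ∧ x i ≤ l i := by
    intro i
    have h1 := hli i
    rw [Finset.sum_range_succ, hkx] at h1
    omega
  have step1 : (∏ j ∈ Finset.range k, trans pbar (s j) (s (j+1)))
      = (∏ j ∈ Finset.range k, npow a (s (j+1)))
        * (∏ j ∈ Finset.range k, trans p (s j) (s (j+1)))
        / ∏ j ∈ Finset.range k, npow fa (s j) := by
    rw [← Finset.prod_mul_distrib, ← Finset.prod_div_distrib]
    refine Finset.prod_congr rfl fun j _ => ?_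
    rw [trans_weight h (s j) (s (j+1))]
    rfl
  have hA : (∏ j ∈ Finset.range k, npow a (s (j+1)))
      = ∏ i, a i ^ (l i - x0 i) := by
    unfold npow
    rw [Finset.prod_comm]
    exact Finset.prod_congr rfl fun i _ => by
      rw [Finset.prod_pow_eq_pow_sum, (hsum1 i).1]
  have hB : (∏ j ∈ Finset.range k, npow fa (s j))
      = ∏ i, fa i ^ (l i - x i) := by
    unfold npow
    rw [Finset.prod_comm]
    exact Finset.prod_congr rfl fun i _ => by
      rw [Finset.prod_pow_eq_pow_sum, (hsum2 i).1]
  have hA' : (∏ i, a i ^ ((l i:ℤ) - (x0 i:ℤ))) = ∏ i, a i ^ (l i - x0 i) := by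
    refine Finset.prod_congr rfl fun i _ => ?_
    rw [← Nat.cast_sub (hsum1 i).2, zpow_natCast]
  have hB' : (∏ i, fa i ^ ((x i:ℤ) - (l i:ℤ))) = (∏ i, fa i ^ (l i - x i))⁻¹ := by
    rw [← Finset.prod_inv_distrib]
    refine Finset.prod_congr rfl fun i _ => ?_
    rw [show (x i:ℤ) - (l i:ℤ) = -((l i:ℤ) - (x i:ℤ)) by ring, ← Nat.cast_sub (hsum2 i).2,
      zpow_neg, zpow_natCast]
  rw [step1, hA, hB, hA', hB']
  ring

/-- joint law of `(X̄_k, N̄_k)` of the associated process versus the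
original process: `P_{x₀}(X̄_k = x, N̄_k = l) = a^{l-x₀} f(a)^{x-l} P_{x₀}(X_k = x, N_k = l)`. -/
theorem assoc_joint_progeny {d : ℕ} (p : Fin d → (Fin d → ℕ) → ℝ)
    (hp : ∀ i, IsPMF (p i))
    (a : Fin d → ℝ) (ha : ∀ i, 0 < a i)
    (hfa : ∀ i, Summable fun k => p i k * npow a k)
    (fa : Fin d → ℝ) (hfadef : ∀ i, fa i = ∑' k, p i k * npow a k)
    (pbar : Fin d → (Fin d → ℕ) → ℝ)
    (hpbar : ∀ i k, pbar i k = npow a k * p i k / fa i)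
    (μ μbar : (Fin d → ℕ) → Measure (ℕ → Fin d → ℕ))
    (hμ : IsGW p μ) (hμbar : IsGW pbar μbar) :
    ∀ (x0 x : Fin d → ℕ) (k : ℕ), 1 ≤ k → ∀ l : Fin d → ℕ,
      μbar x0 {ω | ω k = x ∧ (∑ j ∈ Finset.range (k + 1), ω j) = l}
        = ENNReal.ofReal
            ((∏ i, a i ^ ((l i : ℤ) - (x0 i : ℤ))) *
              ∏ i, fa i ^ ((x i : ℤ) - (l i : ℤ))) *
          μ x0 {ω | ω k = x ∧ (∑ j ∈ Finset.range (k + 1), ω j) = l} := by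
  intro x0 x k _hk l
  classical
  have hfapos : ∀ i, 0 < fa i := fun i => (hfadef i) ▸ fa_pos' (hp i) ha (hfa i)
  have hC : (0:ℝ) ≤ (∏ i, a i ^ ((l i:ℤ) - (x0 i:ℤ))) * ∏ i, fa i ^ ((x i:ℤ) - (l i:ℤ)) :=
    (mul_pos (Finset.prod_pos fun i _ => zpow_pos (ha i) _)
      (Finset.prod_pos fun i _ => zpow_pos (hfapos i) _)).le
  set E : Set (ℕ → Fin d → ℕ) :=
    {ω | ω k = x ∧ (∑ j ∈ Finset.range (k + 1), ω j) = l} with hEdef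
  set S : Set (ℕ → Fin d → ℕ) := {ω | ω 0 = x0} with hSdef
  set ι := {s : Fin (k+1) → Fin d → ℕ // s 0 = x0 ∧ s (Fin.last k) = x ∧ (∑ j, s j) = l}
    with hι
  set ext : (Fin (k+1) → Fin d → ℕ) → ℕ → Fin d → ℕ :=
    fun s j => if h : j < k + 1 then s ⟨j, h⟩ else 0 with hextdef
  set cyl : ι → Set (ℕ → Fin d → ℕ) := fun s => {ω | ∀ j ≤ k, ω j = ext s.1 j} with hcyldef
  have hext_apply : ∀ (s : Fin (k+1) → Fin d → ℕ) (j : Fin (k+1)), ext s j.1 = s j := by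
    intro s j
    simp [hextdef, j.isLt]
    exact fun h => absurd j.isLt (by omega)
  have hext0 : ∀ s : ι, ext s.1 0 = x0 := by
    intro s
    have h1 := hext_apply s.1 0
    simpa using h1.trans s.2.1
  have hextk : ∀ s : ι, ext s.1 k = x := by
    intro s
    have h1 := hext_apply s.1 (Fin.last k)
    simpa [Fin.last] using h1.trans s.2.2.1
  have hextsum : ∀ s : ι, (∑ j ∈ Finset.range (k+1), ext s.1 j) = l := by
    intro s
    have h1 : (∑ j ∈ Finset.range (k+1), ext s.1 j) = ∑ j : Fin (k+1), s.1 j := by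
      rw [← Fin.sum_univ_eq_sum_range (fun j => ext s.1 j) (k+1)]
      exact Finset.sum_congr rfl fun j _ => hext_apply s.1 j
    rw [h1]
    exact s.2.2.2
  have hdecomp : E ∩ S = ⋃ s : ι, cyl s := by
    ext ω
    constructor
    · rintro ⟨⟨hωk, hωl⟩, hω0⟩
      refine Set.mem_iUnion.mpr ⟨⟨fun j => ω j.1, ?_, ?_, ?_⟩, ?_⟩
      · simpa [hSdef] using hω0
      · simpa [Fin.last] using hωk
      · rw [Fin.sum_univ_eq_sum_range (fun j => ω j) (k+1)]
        exact hωl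
      · intro j hj
        simp [hcyldef, hextdef, Nat.lt_succ_of_le hj]
        exact fun h => absurd hj (by omega)
    · intro hmem
      obtain ⟨s, hs⟩ := Set.mem_iUnion.mp hmem
      have hcylω : ∀ j ≤ k, ω j = ext s.1 j := hs
      have hωk : ω k = x := (hcylω k le_rfl).trans (hextk s)
      have hω0 : ω 0 = x0 := (hcylω 0 (Nat.zero_le k)).trans (hext0 s)
      refine ⟨⟨hωk, ?_⟩, hω0⟩
      rw [show (∑ j ∈ Finset.range (k+1), ω j) = ∑ j ∈ Finset.range (k+1), ext s.1 j from
        Finset.sum_congr rfl fun j hj => hcylω j (Nat.lt_succ_iff.mp (Finset.mem_range.mp hj))]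
      exact hextsum s
  have hSmeas : MeasurableSet S := by
    have h1 : S = (fun ω : ℕ → Fin d → ℕ => ω 0) ⁻¹' {x0} := by
      ext ω
      simp [hSdef]
    rw [h1]
    exact (measurable_pi_apply 0) (measurableSet_singleton x0)
  have hcylmeas : ∀ s : ι, MeasurableSet (cyl s) := by
    intro s
    have h1 : cyl s = ⋂ j, ⋂ (_ : j ≤ k), (fun ω : ℕ → Fin d → ℕ => ω j) ⁻¹' {ext s.1 j} := by
      ext ω
      simp [hcyldef]
    rw [h1]
    exact MeasurableSet.iInter fun j => MeasurableSet.iInter fun _ =>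
      (measurable_pi_apply j) (measurableSet_singleton _)
  have hdisj : Pairwise (Function.onFun Disjoint cyl) := by
    intro s t hst
    rw [Function.onFun, Set.disjoint_left]
    intro ω hω1 hω2
    apply hst
    apply Subtype.ext
    funext j
    have h1 : ω j.1 = ext s.1 j.1 := hω1 j.1 (Nat.lt_succ_iff.mp j.isLt)
    have h2 : ω j.1 = ext t.1 j.1 := hω2 j.1 (Nat.lt_succ_iff.mp j.isLt)
    rw [← hext_apply s.1 j, ← hext_apply t.1 j, ← h1, ← h2]
  have key : ∀ (q : Fin d → (Fin d → ℕ) → ℝ) (ν : (Fin d → ℕ) → Measure (ℕ → Fin d → ℕ)),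
      IsGW q ν →
      ν x0 E = ∑' s : ι,
        ENNReal.ofReal (∏ j ∈ Finset.range k, trans q (ext s.1 j) (ext s.1 (j+1))) := by
    intro q ν hν
    haveI := hν.1 x0
    have hS1 : ν x0 S = 1 := by
      have h1 := hν.2 x0 0 (fun _ => x0) rfl
      have hset : {ω : ℕ → Fin d → ℕ | ∀ j ≤ 0, ω j = (fun _ => x0 : ℕ → Fin d → ℕ) j} = S := by
        ext ω
        simp only [Set.mem_setOf_eq, Nat.le_zero, hSdef]
        constructor
        · intro h; exact h 0 rfl
        · intro h j hj; subst hj; exact h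
      rw [hset] at h1
      simpa using h1
    have hScompl : ν x0 Sᶜ = 0 := by
      rw [measure_compl hSmeas (measure_ne_top _ _), hS1, measure_univ]
      simp
    have hE_ES : ν x0 E = ν x0 (E ∩ S) := by
      have h1 : ν x0 (E ∩ S) + ν x0 (E \ S) = ν x0 E := measure_inter_add_diff E hSmeas
      have h2 : ν x0 (E \ S) = 0 :=
        measure_mono_null (Set.diff_subset_compl E S) hScompl
      rw [← h1, h2, add_zero]
    rw [hE_ES, hdecomp, measure_iUnion hdisj hcylmeas]
    exact tsum_congr fun s => hν.2 x0 k (ext s.1) (hext0 s)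
  rw [key pbar μbar hμbar, key p μ hμ, ← ENNReal.tsum_mul_left]
  refine tsum_congr fun s => ?_
  rw [path_prod hfapos hpbar k (ext s.1) x0 x l (hext0 s) (hextk s) (hextsum s),
    ENNReal.ofReal_mul hC]

end GW
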